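/- Let X = [0,1] ∪ [2,3], f_1(x) = x² on [0,1], f_1(x) = (x−2)^{1/3} + 2 on [2,3], f_2(x) = x+2 on [0,1], f_2(x) = x−2 on [2,3], F = Γ(f_1) ∪ Γ(f_2), and A = {x ∈ X_F^+ : x(k) ∈ {0,2} for all k}. Then σ_F^+(A) ⊆ A, σ_F^+(X_F^+ \ A) ⊆ X_F^+ \ A, and (X_F^+, σ_F^+) has sensitive dependence on initial conditions with respect to A. -/

import Mathlib

open Set

/-- `X = [0,1] ∪ [2,3]`. -/
def XS : Set ℝ := Icc 0 1 ∪ Icc 2 3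

/-- `f₁(x) = x²` on `[0,1]`, `f₁(x) = (x-2)^{1/3} + 2` on `[2,3]`. -/
noncomputable def f₁ (x : ℝ) : ℝ :=
  if x ≤ 1 then x ^ 2 else (x - 2) ^ ((1:ℝ)/3) + 2

/-- `f₂(x) = x + 2` on `[0,1]`, `f₂(x) = x - 2` on `[2,3]`. -/
noncomputable def f₂ (x : ℝ) : ℝ := if x ≤ 1 then x + 2 else x - 2

/-- `F = Γ(f₁) ∪ Γ(f₂)` as a relation on `X`. -/
noncomputable def Frel : Set (ℝ × ℝ) :=
  {p | p.1 ∈ XS ∧ (p.2 = f₁ p.1 ∨ p.2 = f₂ p.1)}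

/-- The Mahavier product `X_F^+`. -/
def MahavierPlus (F : Set (ℝ × ℝ)) : Set (ℕ → ℝ) :=
  {x | ∀ i : ℕ, (x i, x (i + 1)) ∈ F}

/-- The shift map on sequences. -/
def shiftMap (x : ℕ → ℝ) : ℕ → ℝ := fun i => x (i + 1)

/-- The product metric `d(x,y) = max_k |y_k - x_k|/2^k` (indices starting at 1). -/
noncomputable def rho (x y : ℕ → ℝ) : ℝ :=
  ⨆ k : ℕ, |y k - x k| / 2 ^ (k + 1)

/-- Distance of a point to a set with respect to `rho`. -/
noncomputable def rhoDist (x : ℕ → ℝ) (S : Set (ℕ → ℝ)) : ℝ :=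
  sInf {r : ℝ | ∃ a ∈ S, r = rho x a}

/-- The set `A` of sequences with all coordinates in `{0,2}`. -/
def Aset : Set (ℕ → ℝ) :=
  {x | x ∈ MahavierPlus Frel ∧ ∀ k : ℕ, x k = 0 ∨ x k = 2}

-- ### auxiliary lemmas

lemma XS_bounds {r : ℝ} (h : r ∈ XS) : 0 ≤ r ∧ r ≤ 3 := by
  rcases h with h | h
  · exact ⟨h.1, by linarith [h.2]⟩
  · exact ⟨by linarith [h.1], h.2⟩

lemma backstep {p q : ℝ} (h : (p, q) ∈ Frel) (hq : q = 0 ∨ q = 2) : p = 0 ∨ p = 2 := by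
  obtain ⟨hp, hbr⟩ := h
  dsimp only at hp hbr
  by_cases hp1 : p ≤ 1
  · have hp01 : 0 ≤ p ∧ p ≤ 1 := by
      rcases hp with h | h
      · exact ⟨h.1, h.2⟩
      · exact absurd hp1 (by push_neg; linarith [h.1])
    rcases hbr with hb | hb
    · rw [f₁, if_pos hp1] at hb
      rcases hq with h0 | h2
      · left; nlinarith [hp01.1]
      · exfalso; nlinarith [hp01.1, hp01.2]
    · rw [f₂, if_pos hp1] at hb
      rcases hq with h0 | h2
      · exfalso; linarith [hp01.1]
      · left; linarith
  · have hp23 : 2 ≤ p ∧ p ≤ 3 := by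
      rcases hp with h | h
      · exact absurd h.2 (by push_neg at hp1 ⊢; linarith)
      · exact ⟨h.1, h.2⟩
    rcases hbr with hb | hb
    · rw [f₁, if_neg hp1] at hb
      have hnn : (0:ℝ) ≤ p - 2 := by linarith [hp23.1]
      have hpos : 0 ≤ (p-2) ^ ((1:ℝ)/3) := Real.rpow_nonneg hnn _
      rcases hq with h0 | h2
      · exfalso; rw [h0] at hb; linarith
      · right
        have hz : (p-2) ^ ((1:ℝ)/3) = 0 := by rw [h2] at hb; linarith
        have := (Real.rpow_eq_zero hnn (by norm_num)).mp hz
        linarith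
    · rw [f₂, if_neg hp1] at hb
      rcases hq with h0 | h2
      · right; rw [h0] at hb; linarith
      · exfalso; rw [h2] at hb; linarith [hp23.2]

lemma back_many (z : ℕ → ℝ) (hz : z ∈ MahavierPlus Frel) :
    ∀ m k, (z (k + m) = 0 ∨ z (k + m) = 2) → (z k = 0 ∨ z k = 2) := by
  intro m
  induction m with
  | zero => intro k h; exact h
  | succ m ih =>
    intro k h
    have h' : z (k + 1) = 0 ∨ z (k + 1) = 2 :=
      ih (k+1) (by rwa [show k + 1 + m = k + (m+1) by omega])
    exact backstep (hz k) h'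

lemma shift_iter (n : ℕ) : ∀ (x : ℕ → ℝ) (k : ℕ), (shiftMap^[n] x) k = x (n + k) := by
  induction n with
  | zero => intro x k; simp
  | succ n ih =>
    intro x k
    rw [Function.iterate_succ_apply, ih]
    show x (n + k + 1) = x (n + 1 + k)
    congr 1; omega

lemma zero_mem_A : (fun _ : ℕ => (0:ℝ)) ∈ Aset := by
  refine ⟨fun i => ⟨Or.inl ⟨le_refl 0, by norm_num⟩, Or.inl ?_⟩, fun k => Or.inl rfl⟩
  rw [f₁, if_pos (by norm_num : (0:ℝ) ≤ 1)]; norm_num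

lemma rho_bddAbove (u v : ℕ → ℝ) (h : ∀ k, |v k - u k| ≤ 3) :
    BddAbove (Set.range fun k : ℕ => |v k - u k| / 2 ^ (k+1)) := by
  refine ⟨3/2, ?_⟩
  rintro r ⟨j, rfl⟩
  have h2 : (2:ℝ) ≤ 2 ^ (j+1) := by
    calc (2:ℝ) = 2^1 := (pow_one 2).symm
    _ ≤ 2 ^ (j+1) := by
        apply pow_le_pow_right₀ (by norm_num); omega
  calc |v j - u j| / 2^(j+1) ≤ 3 / 2^(j+1) := by gcongr; exact h j
  _ ≤ 3/2 := by gcongr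

lemma le_rho (u v : ℕ → ℝ) (h : ∀ k, |v k - u k| ≤ 3) (k : ℕ) :
    |v k - u k| / 2 ^ (k+1) ≤ rho u v :=
  le_ciSup (rho_bddAbove u v h) k

lemma rhoDist_ge (u : ℕ → ℝ) (hu : ∀ k, 0 ≤ u k ∧ u k ≤ 3)
    (h0 : ∀ c : ℝ, c = 0 ∨ c = 2 → (1:ℝ)/2 ≤ |c - u 0|) :
    (1:ℝ)/4 ≤ rhoDist u Aset := by
  have hne : (rho u (fun _ => 0)) ∈ {r : ℝ | ∃ a ∈ Aset, r = rho u a} := ⟨_, zero_mem_A, rfl⟩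
  apply le_csInf ⟨_, hne⟩
  rintro r ⟨a, ha, rfl⟩
  have habs : ∀ k, |a k - u k| ≤ 3 := by
    intro k
    rcases ha.2 k with h | h <;> rw [h, abs_le] <;>
      exact ⟨by linarith [(hu k).1, (hu k).2], by linarith [(hu k).1, (hu k).2]⟩
  have hle := le_rho u a habs 0
  have h1 := h0 (a 0) (ha.2 0)
  calc (1:ℝ)/4 = ((1:ℝ)/2) / 2 ^ (0+1) := by norm_num
    _ ≤ |a 0 - u 0| / 2 ^ (0+1) := by gcongr
    _ ≤ rho u a := hle

lemma S_far (s : ℝ) (hs : s ∈ Icc ((1:ℝ)/2) 1 ∪ Icc ((5:ℝ)/2) 3) :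
    (0 ≤ s ∧ s ≤ 3) ∧ ∀ c : ℝ, c = 0 ∨ c = 2 → (1:ℝ)/2 ≤ |c - s| := by
  rcases hs with h | h
  · refine ⟨⟨by linarith [h.1], by linarith [h.2]⟩, ?_⟩
    rintro c (rfl | rfl)
    · rw [le_abs]; right; simp; linarith [h.1]
    · rw [le_abs]; left; linarith [h.2]
  · refine ⟨⟨by linarith [h.1], h.2⟩, ?_⟩
    rintro c (rfl | rfl)
    · rw [le_abs]; right; simp; linarith [h.1]
    · rw [le_abs]; right; simp; linarith [h.1]

noncomputable def gseq (b : ℝ) (m : ℕ) : ℝ := (b - 2) ^ (((1:ℝ)/3) ^ m) + 2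

lemma gseq_gt {b : ℝ} (hb1 : 2 < b) (m : ℕ) : 2 < gseq b m := by
  have := Real.rpow_pos_of_pos (show (0:ℝ) < b - 2 by linarith) (((1:ℝ)/3) ^ m)
  unfold gseq; linarith

lemma gseq_le {b : ℝ} (hb1 : 2 < b) (hb2 : b ≤ 3) (m : ℕ) : gseq b m ≤ 3 := by
  have := Real.rpow_le_one (show (0:ℝ) ≤ b - 2 by linarith)
    (show b - 2 ≤ 1 by linarith) (by positivity : (0:ℝ) ≤ ((1:ℝ)/3) ^ m)
  unfold gseq; linarith

lemma gseq_zero {b : ℝ} : gseq b 0 = b := by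
  unfold gseq; rw [pow_zero, Real.rpow_one]; ring

lemma gseq_succ {b : ℝ} (hb1 : 2 < b) (m : ℕ) : f₁ (gseq b m) = gseq b (m+1) := by
  have hgt := gseq_gt hb1 m
  rw [f₁, if_neg (by linarith)]
  have h1 : gseq b m - 2 = (b - 2) ^ (((1:ℝ)/3) ^ m) := by unfold gseq; ring
  rw [h1, ← Real.rpow_mul (by linarith : (0:ℝ) ≤ b - 2)]
  unfold gseq
  rw [pow_succ]

lemma gseq_mono {b : ℝ} (hb1 : 2 < b) (hb2 : b ≤ 3) {m m' : ℕ} (h : m ≤ m') :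
    gseq b m ≤ gseq b m' := by
  unfold gseq
  have := Real.rpow_le_rpow_of_exponent_ge (show (0:ℝ) < b - 2 by linarith)
    (show b - 2 ≤ 1 by linarith)
    (pow_le_pow_of_le_one (by norm_num) (by norm_num) h : ((1:ℝ)/3) ^ m' ≤ ((1:ℝ)/3) ^ m)
  linarith

lemma gseq_big {b : ℝ} (hb1 : 2 < b) : ∃ m, ∀ m' ≥ m, 5/2 ≤ gseq b m' := by
  have hbpos : (0:ℝ) < b - 2 := by linarith
  have h1 : Filter.Tendsto (fun m : ℕ => ((1:ℝ)/3) ^ m) Filter.atTop (nhds 0) :=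
    tendsto_pow_atTop_nhds_zero_of_lt_one (by norm_num) (by norm_num)
  have h2 : ContinuousAt (fun s : ℝ => (b - 2) ^ s) 0 :=
    Real.continuousAt_const_rpow (ne_of_gt hbpos)
  have h3 : Filter.Tendsto (fun m : ℕ => (b - 2) ^ (((1:ℝ)/3) ^ m)) Filter.atTop (nhds 1) := by
    have := h2.tendsto.comp h1
    simpa [Function.comp_def, Real.rpow_zero] using this
  have h4 : ∀ᶠ m in Filter.atTop, (1:ℝ)/2 ≤ (b - 2) ^ (((1:ℝ)/3) ^ m) :=
    h3.eventually (eventually_ge_nhds (by norm_num))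
  obtain ⟨m, hm⟩ := Filter.eventually_atTop.mp h4
  exact ⟨m, fun m' hm' => by have := hm m' hm'; unfold gseq; linarith⟩

lemma ext_lemma (w : ℕ → ℝ) (N : ℕ) (hw : ∀ i < N, (w i, w (i+1)) ∈ Frel)
    (hwX : w N ∈ XS) (h0 : w N ≠ 0) (h2 : w N ≠ 2) :
    ∃ x ∈ MahavierPlus Frel, ∃ y ∈ MahavierPlus Frel,
      (∀ i ≤ N, x i = w i ∧ y i = w i) ∧
      ∃ n, 0 < n ∧
        (∀ k, x (n+k) ∈ Icc ((1:ℝ)/2) 1 ∪ Icc ((5:ℝ)/2) 3) ∧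
        (∀ k, y (n+k) ∈ Icc ((1:ℝ)/2) 1 ∪ Icc ((5:ℝ)/2) 3) ∧
        (3/2:ℝ) ≤ |x (n+1) - y (n+1)| := by
  set a := w N with ha
  set b := if a ≤ 1 then a + 2 else (a - 2) ^ ((1:ℝ)/3) + 2 with hbdef
  have hb : 2 < b ∧ b ≤ 3 := by
    by_cases hA : a ≤ 1
    · have ha01 : 0 ≤ a ∧ a ≤ 1 := by
        rcases hwX with h | h
        · exact ⟨h.1, h.2⟩
        · exact absurd hA (by push_neg; linarith [h.1])
      have hapos : 0 < a := lt_of_le_of_ne ha01.1 (Ne.symm h0)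
      rw [hbdef, if_pos hA]
      constructor <;> linarith [ha01.2]
    · have ha23 : 2 ≤ a ∧ a ≤ 3 := by
        rcases hwX with h | h
        · exact absurd h.2 (by push_neg at hA ⊢; linarith)
        · exact ⟨h.1, h.2⟩
      have hapos : 0 < a - 2 := by
        rcases lt_or_eq_of_le ha23.1 with h | h
        · linarith
        · exact absurd h.symm h2
      have hr1 : 0 < (a - 2) ^ ((1:ℝ)/3) := Real.rpow_pos_of_pos hapos _
      have hr2 : (a - 2) ^ ((1:ℝ)/3) ≤ 1 :=
        Real.rpow_le_one (by linarith) (by linarith [ha23.2]) (by norm_num)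
      rw [hbdef, if_neg hA]
      constructor <;> linarith
  have hfab : b = f₁ a ∨ b = f₂ a := by
    by_cases hA : a ≤ 1
    · right; rw [f₂, if_pos hA, hbdef, if_pos hA]
    · left; rw [f₁, if_neg hA, hbdef, if_neg hA]
  obtain ⟨m₀, hm₀⟩ := gseq_big hb.1
  set n := N + 1 + m₀ with hn
  have hgX : ∀ m, gseq b m ∈ XS :=
    fun m => Or.inr ⟨le_of_lt (gseq_gt hb.1 m), gseq_le hb.1 hb.2 m⟩
  have hgstep : ∀ m, (gseq b m, gseq b (m+1)) ∈ Frel :=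
    fun m => ⟨hgX m, Or.inl (gseq_succ hb.1 m).symm⟩
  have hgm₀ : 5/2 ≤ gseq b m₀ := hm₀ m₀ (le_refl _)
  have hg3 : ∀ m, gseq b m ≤ 3 := gseq_le hb.1 hb.2
  set x : ℕ → ℝ := fun i => if i ≤ N then w i else gseq b (i - N - 1) with hx
  set y : ℕ → ℝ := fun i => if i ≤ n then x i
      else if (i - n) % 2 = 1 then gseq b m₀ - 2 else gseq b m₀ with hy
  have hxval : ∀ k, x (n + k) = gseq b (m₀ + k) := by
    intro k
    rw [hx]
    simp only
    rw [if_neg (by omega)]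
    congr 1; omega
  have hxM : x ∈ MahavierPlus Frel := by
    intro i
    by_cases h1 : i + 1 ≤ N
    · rw [hx]; simp only
      rw [if_pos (by omega), if_pos h1]
      exact hw i (by omega)
    · by_cases hiN : i ≤ N
      · have hiN' : i = N := by omega
        rw [hx]; simp only
        rw [if_pos hiN, if_neg h1, hiN']
        rw [show N + 1 - N - 1 = 0 by omega, gseq_zero]
        exact ⟨hwX, hfab⟩
      · rw [hx]; simp only
        rw [if_neg hiN, if_neg h1]
        have e1 : i + 1 - N - 1 = (i - N - 1) + 1 := by omega
        rw [e1]
        exact hgstep _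
  have hxn : x n = gseq b m₀ := by
    have := hxval 0
    simpa using this
  have hglow : ∀ m, m₀ ≤ m → gseq b m ∈ Icc ((5:ℝ)/2) 3 :=
    fun m hm => ⟨hm₀ m hm, hg3 m⟩
  have hgm₀' : gseq b m₀ - 2 ∈ Icc ((1:ℝ)/2) 1 := ⟨by linarith, by linarith [hg3 m₀]⟩
  have hyM : y ∈ MahavierPlus Frel := by
    intro i
    by_cases h1 : i + 1 ≤ n
    · rw [hy]; simp only
      rw [if_pos (by omega), if_pos h1]
      exact hxM i
    · by_cases hin : i ≤ n
      · have hin' : i = n := by omega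
        rw [hy]; simp only
        rw [if_pos hin, if_neg h1, hin', hxn]
        rw [if_pos (by omega : (n + 1 - n) % 2 = 1)]
        refine ⟨hgX m₀, Or.inr ?_⟩
        rw [f₂, if_neg (by linarith [gseq_gt hb.1 m₀])]
      · rw [hy]; simp only
        rw [if_neg hin, if_neg h1]
        rcases Nat.even_or_odd (i - n) with he | he
        · have e1 : (i - n) % 2 = 0 := Nat.even_iff.mp he
          have e2 : (i + 1 - n) % 2 = 1 := by omega
          rw [if_neg (by omega), if_pos e2]
          refine ⟨hgX m₀, Or.inr ?_⟩
          rw [f₂, if_neg (by linarith [gseq_gt hb.1 m₀])]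
        · have e1 : (i - n) % 2 = 1 := Nat.odd_iff.mp he
          have e2 : (i + 1 - n) % 2 = 0 := by omega
          rw [if_pos e1, if_neg (by omega)]
          refine ⟨Or.inl (show gseq b m₀ - 2 ∈ Icc (0:ℝ) 1 from
            ⟨by linarith [hgm₀'.1], by linarith [hgm₀'.2]⟩), Or.inr ?_⟩
          show gseq b m₀ = f₂ (gseq b m₀ - 2)
          rw [f₂, if_pos (by linarith [hgm₀'.2])]
          ring
  refine ⟨x, hxM, y, hyM, ?_, n, by omega, ?_, ?_, ?_⟩
  · intro i hi
    have hxi : x i = w i := by rw [hx]; simp only; rw [if_pos hi]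
    have hyi : y i = x i := by rw [hy]; simp only; rw [if_pos (by omega)]
    exact ⟨hxi, by rw [hyi, hxi]⟩
  · intro k
    rw [hxval k]
    exact Or.inr (hglow _ (by omega))
  · intro k
    match k with
    | 0 =>
      have : y (n + 0) = x n := by
        rw [hy]; simp only [Nat.add_zero]; rw [if_pos (le_refl n)]
      rw [this, hxn]
      exact Or.inr (hglow _ (le_refl _))
    | (k+1) =>
      have hgt : ¬ (n + (k+1) ≤ n) := by omega
      rw [hy]; simp only
      rw [if_neg hgt]
      rcases Nat.even_or_odd (n + (k+1) - n) with he | he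
      · have e0 := Nat.even_iff.mp he
        rw [if_neg (by omega)]
        exact Or.inr (hglow _ (le_refl _))
      · rw [if_pos (Nat.odd_iff.mp he)]
        exact Or.inl hgm₀'
  · have hx1 : x (n + 1) = gseq b (m₀ + 1) := hxval 1
    have hy1 : y (n + 1) = gseq b m₀ - 2 := by
      rw [hy]; simp only
      rw [if_neg (by omega), if_pos (by omega : (n + 1 - n) % 2 = 1)]
    rw [hx1, hy1]
    have hg1 : 5/2 ≤ gseq b (m₀ + 1) := hm₀ _ (by omega)
    rw [abs_of_nonneg (by linarith [hg3 m₀])]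
    linarith [hg3 m₀]

noncomputable def tseq (z : ℕ → ℝ) (t0 : ℝ) : ℕ → ℝ
  | 0 => t0
  | k + 1 =>
    if z (k+1) = z k then
      (if z k = 0 then tseq z t0 k ^ 2 else tseq z t0 k ^ ((1:ℝ)/3))
    else tseq z t0 k

lemma perturb (z : ℕ → ℝ) (N : ℕ) (hz02 : ∀ k ≤ N, z k = 0 ∨ z k = 2)
    (δ : ℝ) (hδ : 0 < δ) :
    ∃ w : ℕ → ℝ, (∀ i < N, (w i, w (i+1)) ∈ Frel) ∧ (∀ i ≤ N, |w i - z i| < δ) ∧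
      w N ∈ XS ∧ w N ≠ 0 ∧ w N ≠ 2 := by
  set D := min δ 1 / 2 with hD
  have hD0 : 0 < D := by
    rw [hD]; have := lt_min hδ (one_pos (α := ℝ)); linarith
  have hDδ : D < δ := by
    rw [hD]; have := min_le_left δ 1; linarith
  have hD1 : D ≤ 1/2 := by
    rw [hD]; have := min_le_right δ 1; linarith
  set t := tseq z (D ^ (3:ℕ)^N) with ht
  have key : ∀ k, k ≤ N → 0 < t k ∧ t k ≤ D ^ (3:ℕ)^(N - k) := by
    intro k
    induction k with
    | zero =>
      intro _
      constructor
      · exact pow_pos hD0 _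
      · rw [ht]; show tseq z (D ^ (3:ℕ)^N) 0 ≤ _; rw [tseq, Nat.sub_zero]
    | succ k ih =>
      intro hk
      obtain ⟨hpos, hle⟩ := ih (by omega)
      set B := D ^ (3:ℕ)^(N - (k+1)) with hB
      have hBpos : 0 < B := pow_pos hD0 _
      have hB1 : B ≤ 1 := pow_le_one₀ hD0.le (by linarith)
      have hsplit : D ^ (3:ℕ)^(N - k) = B ^ (3:ℕ) := by
        rw [hB, ← pow_mul]
        congr 1
        rw [← pow_succ]
        congr 1
        omega
      have ht1 : t k ≤ 1 := le_trans hle (pow_le_one₀ hD0.le (by linarith))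
      have hcube : B ^ (3:ℕ) ≤ B := by
        nlinarith [mul_nonneg (mul_nonneg hBpos.le (sub_nonneg.mpr hB1))
          (by linarith : (0:ℝ) ≤ 1 + B)]
      have hstep : t (k+1) = if z (k+1) = z k then
          (if z k = 0 then t k ^ 2 else t k ^ ((1:ℝ)/3)) else t k := by
        rw [ht]; rfl
      rw [hstep]
      split_ifs with h1 h2
      · constructor
        · positivity
        · nlinarith [hle, hsplit, hcube]
      · constructor
        · exact Real.rpow_pos_of_pos hpos _
        · have s1 : t k ^ ((1:ℝ)/3) ≤ (D ^ (3:ℕ)^(N-k)) ^ ((1:ℝ)/3) :=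
            Real.rpow_le_rpow hpos.le hle (by norm_num)
          have s2 : (D ^ (3:ℕ)^(N-k) : ℝ) ^ ((1:ℝ)/3) = B := by
            rw [hsplit, ← Real.rpow_natCast B 3, ← Real.rpow_mul hBpos.le]
            norm_num
          rw [s2] at s1
          exact s1
      · exact ⟨hpos, by nlinarith [hle, hsplit, hcube]⟩
  have htD : ∀ k, k ≤ N → 0 < t k ∧ t k ≤ D := by
    intro k hk
    obtain ⟨h1, h2⟩ := key k hk
    refine ⟨h1, le_trans h2 ?_⟩
    calc D ^ (3:ℕ)^(N-k) ≤ D ^ 1 :=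
          pow_le_pow_of_le_one hD0.le (by linarith) (Nat.one_le_pow _ _ (by norm_num))
      _ = D := pow_one D
  refine ⟨fun k => z k + t k, ?_, ?_, ?_, ?_, ?_⟩
  · intro i hi
    have hti := htD i (by omega)
    have hti1 := htD (i+1) (by omega)
    have hstep : t (i+1) = if z (i+1) = z i then
        (if z i = 0 then t i ^ 2 else t i ^ ((1:ℝ)/3)) else t i := by
      rw [ht]; rfl
    rcases hz02 i (by omega) with hzi | hzi <;> rcases hz02 (i+1) (by omega) with hzi1 | hzi1
    · -- z i = 0, z (i+1) = 0 : f₁ branch, square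
      have htv : t (i+1) = t i ^ 2 := by
        rw [hstep, if_pos (by rw [hzi, hzi1]), if_pos hzi]
      refine ⟨Or.inl (show z i + t i ∈ Icc (0:ℝ) 1 from
          ⟨by rw [hzi]; linarith [hti.1], by rw [hzi]; linarith [hti.2]⟩), Or.inl ?_⟩
      show z (i+1) + t (i+1) = f₁ (z i + t i)
      rw [f₁, if_pos (by rw [hzi]; simp; linarith [hti.2])]
      rw [htv, hzi, hzi1]; ring
    · -- z i = 0, z (i+1) = 2 : f₂ branch
      have htv : t (i+1) = t i := by
        rw [hstep, if_neg (by rw [hzi, hzi1]; norm_num)]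
      refine ⟨Or.inl (show z i + t i ∈ Icc (0:ℝ) 1 from
          ⟨by rw [hzi]; linarith [hti.1], by rw [hzi]; linarith [hti.2]⟩), Or.inr ?_⟩
      show z (i+1) + t (i+1) = f₂ (z i + t i)
      rw [f₂, if_pos (by rw [hzi]; simp; linarith [hti.2])]
      rw [htv, hzi, hzi1]; ring
    · -- z i = 2, z (i+1) = 0 : f₂ branch
      have htv : t (i+1) = t i := by
        rw [hstep, if_neg (by rw [hzi, hzi1]; norm_num)]
      refine ⟨Or.inr (show z i + t i ∈ Icc (2:ℝ) 3 from
          ⟨by rw [hzi]; linarith [hti.1], by rw [hzi]; linarith [hti.2]⟩), Or.inr ?_⟩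
      show z (i+1) + t (i+1) = f₂ (z i + t i)
      rw [f₂, if_neg (by rw [hzi]; push_neg; linarith [hti.1])]
      rw [htv, hzi, hzi1]; ring
    · -- z i = 2, z (i+1) = 2 : f₁ branch, cube root
      have htv : t (i+1) = t i ^ ((1:ℝ)/3) := by
        rw [hstep, if_pos (by rw [hzi, hzi1]), if_neg (by rw [hzi]; norm_num)]
      refine ⟨Or.inr (show z i + t i ∈ Icc (2:ℝ) 3 from
          ⟨by rw [hzi]; linarith [hti.1], by rw [hzi]; linarith [hti.2]⟩), Or.inl ?_⟩
      show z (i+1) + t (i+1) = f₁ (z i + t i)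
      rw [f₁, if_neg (by rw [hzi]; push_neg; linarith [hti.1])]
      rw [htv, hzi, hzi1]
      rw [show (2:ℝ) + t i - 2 = t i by ring]
      ring
  · intro i hi
    have hti := htD i hi
    have : (fun k => z k + t k) i - z i = t i := by ring
    rw [this, abs_of_pos hti.1]
    linarith [hti.2]
  · have htN := htD N (le_refl N)
    rcases hz02 N (le_refl N) with hzN | hzN
    · exact Or.inl ⟨show (0:ℝ) ≤ z N + t N by rw [hzN]; linarith [htN.1],
        show z N + t N ≤ 1 by rw [hzN]; linarith [htN.2]⟩
    · exact Or.inr ⟨show (2:ℝ) ≤ z N + t N by rw [hzN]; linarith [htN.1],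
        show z N + t N ≤ 3 by rw [hzN]; linarith [htN.2]⟩
  · have htN := htD N (le_refl N)
    show z N + t N ≠ 0
    rcases hz02 N (le_refl N) with hzN | hzN <;> rw [hzN] <;> intro hc <;> nlinarith [htN.1, htN.2]
  · have htN := htD N (le_refl N)
    show z N + t N ≠ 2
    rcases hz02 N (le_refl N) with hzN | hzN <;> rw [hzN] <;> intro hc <;> nlinarith [htN.1, htN.2]

lemma key_lemma (z : ℕ → ℝ) (hz : z ∈ MahavierPlus Frel) (δ : ℝ) (hδ : 0 < δ) (N : ℕ) :
    ∃ x ∈ MahavierPlus Frel, ∃ y ∈ MahavierPlus Frel,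
      (∀ i ≤ N, |x i - z i| < δ ∧ |y i - z i| < δ) ∧
      ∃ n, 0 < n ∧
        (∀ k, x (n+k) ∈ Icc ((1:ℝ)/2) 1 ∪ Icc ((5:ℝ)/2) 3) ∧
        (∀ k, y (n+k) ∈ Icc ((1:ℝ)/2) 1 ∪ Icc ((5:ℝ)/2) 3) ∧
        (3/2:ℝ) ≤ |x (n+1) - y (n+1)| := by
  by_cases hzN : z N = 0 ∨ z N = 2
  · -- perturb first
    have hall : ∀ k ≤ N, z k = 0 ∨ z k = 2 := by
      intro k hk
      exact back_many z hz (N - k) k (by rw [show k + (N - k) = N by omega]; exact hzN)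
    obtain ⟨w, hwrel, hwz, hwX, hw0, hw2⟩ := perturb z N hall δ hδ
    obtain ⟨x, hxM, y, hyM, hpre, n, hn, hxt, hyt, hxy⟩ :=
      ext_lemma w N hwrel hwX hw0 hw2
    refine ⟨x, hxM, y, hyM, ?_, n, hn, hxt, hyt, hxy⟩
    intro i hi
    rw [(hpre i hi).1, (hpre i hi).2]
    exact ⟨hwz i hi, hwz i hi⟩
  · push_neg at hzN
    obtain ⟨x, hxM, y, hyM, hpre, n, hn, hxt, hyt, hxy⟩ :=
      ext_lemma z N (fun i _ => hz i) (hz N).1 hzN.1 hzN.2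
    refine ⟨x, hxM, y, hyM, ?_, n, hn, hxt, hyt, hxy⟩
    intro i hi
    rw [(hpre i hi).1, (hpre i hi).2]
    simpa using hδ

/-- `σ_F^+(A) ⊆ A`, `σ_F^+(X_F^+ \ A) ⊆ X_F^+ \ A`, and `(X_F^+, σ_F^+)` has
sensitive dependence on initial conditions with respect to `A`. -/
theorem mahavier_cbrt_sensitive_wrt_A :
    (shiftMap '' Aset ⊆ Aset) ∧
    (shiftMap '' (MahavierPlus Frel \ Aset) ⊆ MahavierPlus Frel \ Aset) ∧
    (∃ ε > (0:ℝ), ∀ U : Set (ℕ → ℝ), IsOpen U →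
        (U ∩ MahavierPlus Frel).Nonempty →
        ∃ x ∈ U ∩ MahavierPlus Frel, ∃ y ∈ U ∩ MahavierPlus Frel, ∃ n : ℕ, 0 < n ∧
          min (rho (shiftMap^[n] x) (shiftMap^[n] y))
            (rhoDist (shiftMap^[n] x) Aset + rhoDist (shiftMap^[n] y) Aset)
            > ε) := by
  refine ⟨?_, ?_, ?_⟩
  · rintro _ ⟨x, hx, rfl⟩
    exact ⟨fun i => hx.1 (i+1), fun k => hx.2 (k+1)⟩
  · rintro _ ⟨x, ⟨hxM, hxA⟩, rfl⟩
    refine ⟨fun i => hxM (i+1), fun hA => hxA ⟨hxM, fun k => ?_⟩⟩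
    cases k with
    | zero => exact backstep (hxM 0) (hA.2 0)
    | succ k => exact hA.2 k
  · refine ⟨1/8, by norm_num, ?_⟩
    intro U hU hne
    obtain ⟨z, hzU, hzM⟩ := hne
    obtain ⟨I, u, hIu, hsub⟩ := (isOpen_pi_iff.mp hU) z hzU
    have hd : ∀ i : ℕ, ∃ d : ℝ, 0 < d ∧ (i ∈ I → Metric.ball (z i) d ⊆ u i) := by
      intro i
      by_cases hi : i ∈ I
      · obtain ⟨d, hd, hball⟩ := Metric.isOpen_iff.mp (hIu i hi).1 (z i) (hIu i hi).2
        exact ⟨d, hd, fun _ => hball⟩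
      · exact ⟨1, one_pos, fun h => absurd h hi⟩
    choose d hdpos hdball using hd
    set N := I.sup id with hN
    set δ : ℝ := if h : I.Nonempty then min 1 (I.inf' h d) else 1 with hδdef
    have hδpos : 0 < δ := by
      rw [hδdef]; split
      · apply lt_min one_pos
        rw [Finset.lt_inf'_iff]
        intro i _
        exact hdpos i
      · exact one_pos
    have hδle : ∀ i ∈ I, δ ≤ d i := by
      intro i hi
      rw [hδdef, dif_pos ⟨i, hi⟩]
      exact le_trans (min_le_right _ _) (Finset.inf'_le d hi)
    obtain ⟨x, hxM, y, hyM, hclose, n, hn, hxt, hyt, hxy⟩ := key_lemma z hzM δ hδpos N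
    have hxU : x ∈ U := by
      apply hsub
      intro i hi
      apply hdball i hi
      rw [Metric.mem_ball, Real.dist_eq]
      exact lt_of_lt_of_le (hclose i (Finset.le_sup (f := id) hi)).1 (hδle i hi)
    have hyU : y ∈ U := by
      apply hsub
      intro i hi
      apply hdball i hi
      rw [Metric.mem_ball, Real.dist_eq]
      exact lt_of_lt_of_le (hclose i (Finset.le_sup (f := id) hi)).2 (hδle i hi)
    refine ⟨x, ⟨hxU, hxM⟩, y, ⟨hyU, hyM⟩, n, hn, ?_⟩
    have hxS := fun k => S_far _ (hxt k)
    have hyS := fun k => S_far _ (hyt k)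
    have hx3 : ∀ k, 0 ≤ (shiftMap^[n] x) k ∧ (shiftMap^[n] x) k ≤ 3 := by
      intro k; rw [shift_iter]; exact (hxS k).1
    have hy3 : ∀ k, 0 ≤ (shiftMap^[n] y) k ∧ (shiftMap^[n] y) k ≤ 3 := by
      intro k; rw [shift_iter]; exact (hyS k).1
    have habs : ∀ k, |(shiftMap^[n] y) k - (shiftMap^[n] x) k| ≤ 3 := by
      intro k
      rw [abs_le]
      constructor <;> linarith [(hx3 k).1, (hx3 k).2, (hy3 k).1, (hy3 k).2]
    apply lt_min
    · -- rho part
      have h1 := le_rho (shiftMap^[n] x) (shiftMap^[n] y) habs 1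
      have e1 : (shiftMap^[n] y) 1 = y (n+1) := shift_iter n y 1
      have e2 : (shiftMap^[n] x) 1 = x (n+1) := shift_iter n x 1
      rw [e1, e2] at h1
      have : (3/2:ℝ) ≤ |y (n+1) - x (n+1)| := by rwa [abs_sub_comm]
      have h2 : (3/2:ℝ)/4 ≤ |y (n+1) - x (n+1)| / 2^(1+1) := by
        rw [show ((2:ℝ)^(1+1) : ℝ) = 4 by norm_num]
        gcongr
      calc (1/8:ℝ) < 3/8 := by norm_num
        _ = (3/2)/4 := by norm_num
        _ ≤ |y (n+1) - x (n+1)| / 2^(1+1) := h2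
        _ ≤ rho (shiftMap^[n] x) (shiftMap^[n] y) := h1
    · -- rhoDist part
      have hdx : (1:ℝ)/4 ≤ rhoDist (shiftMap^[n] x) Aset := by
        apply rhoDist_ge _ hx3
        intro c hc
        rw [shift_iter]
        exact (hxS 0).2 c hc
      have hdy : (1:ℝ)/4 ≤ rhoDist (shiftMap^[n] y) Aset := by
        apply rhoDist_ge _ hy3
        intro c hc
        rw [shift_iter]
        exact (hyS 0).2 c hc
      linarith
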